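/- The 4-dimensional algebra T⁴₄₄ over ℂ with basis e₁,e₂,e₃,e₄ and nonzero products e₁e₁ = e₂, e₂e₁ = e₃, e₂e₃ = e₄ is a nilpotent terminal algebra whose annihilator is spanned by e₄, and it is not a left Leibniz algebra. -/
import Mathlib

def kbr1 {V : Type*} [AddCommGroup V] (A : V → V) (B : V → V → V) : V → V → V :=
  fun x y => A (B x y) - B (A x) y - B x (A y)

def kbr2 {V : Type*} [AddCommGroup V] (B C : V → V → V) : V → V → V → V :=
  fun x y z => B (C x y) z + B x (C y z) + B y (C x z)
    - C (B x y) z - C x (B y z) - C y (B x z)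

def IsTerminal {V : Type*} [AddCommGroup V] (P : V → V → V) : Prop :=
  ∀ a x y z, kbr2 (kbr1 (fun w => P a w) P) P x y z = 0

def LeftLeibniz {V : Type*} [AddCommGroup V] (P : V → V → V) : Prop :=
  ∀ a x y, P a (P x y) = P (P a x) y + P x (P a y)

/-- `IsProd mul n v` : `v` is a product of `n` elements of the algebra, under some bracketing. -/
inductive IsProd {V : Type*} (mul : V → V → V) : ℕ → V → Prop
  | single : ∀ v : V, IsProd mul 1 v
  | mul : ∀ {m n : ℕ} {x y : V}, IsProd mul m x → IsProd mul n y → IsProd mul (m + n) (mul x y)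

/-- An algebra is nilpotent if all sufficiently long products vanish. -/
def IsNilpotentAlg {V : Type*} [AddCommGroup V] (mul : V → V → V) : Prop :=
  ∃ N : ℕ, ∀ n ≥ N, ∀ v : V, IsProd mul n v → v = 0

/-- T⁴₄₄: basis `e₁,e₂,e₃,e₄`, nonzero products `e₁e₁ = e₂`, `e₂e₁ = e₃`, `e₂e₃ = e₄`. -/
def mulT444 (x y : Fin 4 → ℂ) : Fin 4 → ℂ :=
  (x 0 * y 0) • (Pi.single 1 1 : Fin 4 → ℂ) + (x 1 * y 0) • (Pi.single 2 1 : Fin 4 → ℂ)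
    + (x 1 * y 2) • (Pi.single 3 1 : Fin 4 → ℂ)

lemma mul0 (x y : Fin 4 → ℂ) : mulT444 x y 0 = 0 := by
  simp [mulT444, Pi.single_apply]
lemma mul1 (x y : Fin 4 → ℂ) : mulT444 x y 1 = x 0 * y 0 := by
  simp [mulT444, Pi.single_apply]
lemma mul2 (x y : Fin 4 → ℂ) : mulT444 x y 2 = x 1 * y 0 := by
  simp [mulT444, Pi.single_apply]
lemma mul3 (x y : Fin 4 → ℂ) : mulT444 x y 3 = x 1 * y 2 := by
  simp [mulT444, Pi.single_apply]

lemma isprod_pos {m : ℕ} {v : Fin 4 → ℂ} (h : IsProd mulT444 m v) : 1 ≤ m := by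
  induction h with
  | single => exact le_refl 1
  | mul h1 h2 ih1 ih2 => omega

lemma isprod_key {m : ℕ} {v : Fin 4 → ℂ} (h : IsProd mulT444 m v) :
    (2 ≤ m → v 0 = 0) ∧ (3 ≤ m → v 1 = 0) ∧ (4 ≤ m → v 2 = 0) ∧ (6 ≤ m → v 3 = 0) := by
  induction h with
  | single w => refine ⟨by omega, by omega, by omega, by omega⟩
  | @mul m n x y h1 h2 ih1 ih2 =>
    have hm := isprod_pos h1
    have hn := isprod_pos h2
    refine ⟨fun _ => mul0 x y, fun h => ?_, fun h => ?_, fun h => ?_⟩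
    · rw [mul1]
      rcases (by omega : 2 ≤ m ∨ 2 ≤ n) with hc | hc
      · rw [ih1.1 hc, zero_mul]
      · rw [ih2.1 hc, mul_zero]
    · rw [mul2]
      rcases (by omega : 3 ≤ m ∨ 2 ≤ n) with hc | hc
      · rw [ih1.2.1 hc, zero_mul]
      · rw [ih2.1 hc, mul_zero]
    · rw [mul3]
      rcases (by omega : 3 ≤ m ∨ 4 ≤ n) with hc | hc
      · rw [ih1.2.1 hc, zero_mul]
      · rw [ih2.2.2.1 hc, mul_zero]

/-- T⁴₄₄ is a nilpotent terminal algebra with annihilator spanned by `e₄`,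
and it is not left Leibniz. -/
theorem stmt16 :
    IsTerminal mulT444 ∧ IsNilpotentAlg mulT444 ∧
    {x : Fin 4 → ℂ | ∀ y, mulT444 x y = 0 ∧ mulT444 y x = 0}
      = (Submodule.span ℂ {(Pi.single 3 1 : Fin 4 → ℂ)} : Submodule ℂ (Fin 4 → ℂ)) ∧
    ¬ LeftLeibniz mulT444 := by
  refine ⟨?_, ?_, ?_, ?_⟩
  · intro a x y z
    funext i
    fin_cases i <;>
      simp [kbr1, kbr2, mul0, mul1, mul2, mul3, Pi.sub_apply, Pi.add_apply] <;> ring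
  · refine ⟨6, fun n hn v hv => ?_⟩
    have h := isprod_key hv
    funext i
    fin_cases i
    · exact h.1 (by omega)
    · exact h.2.1 (by omega)
    · exact h.2.2.1 (by omega)
    · exact h.2.2.2 (by omega)
  · ext x
    simp only [Set.mem_setOf_eq, SetLike.mem_coe, Submodule.mem_span_singleton]
    constructor
    · intro h
      have h1 := h (Pi.single 0 1)
      have h2 := h (Pi.single 1 1)
      have hx0 : x 0 = 0 := by
        have := congrFun h1.1 1
        simpa [mul1, Pi.single_apply] using this
      have hx1 : x 1 = 0 := by
        have := congrFun h1.1 2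
        simpa [mul2, Pi.single_apply] using this
      have hx2 : x 2 = 0 := by
        have := congrFun h2.2 3
        simpa [mul3, Pi.single_apply] using this
      refine ⟨x 3, ?_⟩
      funext i
      fin_cases i <;> simp [Pi.single_apply, hx0, hx1, hx2]
    · rintro ⟨c, rfl⟩ y
      constructor <;> funext i <;> fin_cases i <;>
        simp [mul0, mul1, mul2, mul3, Pi.single_apply]
  · intro h
    have := congrFun (h (Pi.single 0 1) (Pi.single 0 1) (Pi.single 0 1)) 2
    simp [mul0, mul1, mul2, mul3, Pi.add_apply, Pi.single_apply] at this
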